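/- Stationary phase analysis on the homogeneous tree: let Q ≥ 2 be an integer, γ₀ = 2/(Q^{1/2}+Q^{−1/2}), 0 < α < 2, and ψ(λ) = (1 − γ₀ cos λ)^{α/2}. Then: (i) the stationary points of ψ on ℝ are exactly the points of πℤ, with ψ″(0) > 0 and ψ″(π) < 0; (ii) there is a unique λ₀ ∈ (0, π) with ψ″(λ₀) = 0, it satisfies λ₀ ∈ (0, π/2), and ψ″ > 0 on [0, λ₀) and ψ″ < 0 on (λ₀, π]; consequently ψ′ is strictly increasing on [0, λ₀] from 0 to M := ψ′(λ₀) > 0 and strictly decreasing on [λ₀, π] from M to 0; (iii) for every t > 0 and r ≥ 0, the phase ψ_{t,r}(λ) := t·ψ(λ) − r·λ has, on the fundamental domain (−π, π], no stationary point if r/t > M, exactly one stationary point if r/t = M, and exactly two stationary points λ₁ ∈ [0, λ₀) and λ₂ ∈ (λ₀, π] if 0 ≤ r/t < M. -/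

import Mathlib

/-- `γ₀ = 2/(Q^{1/2} + Q^{−1/2})`. -/
noncomputable def gamma0 (Q : ℕ) : ℝ :=
  2 / (Real.sqrt Q + (Real.sqrt Q)⁻¹)

/-- The 2π-periodic phase `ψ(λ) = (1 − γ₀ cos λ)^{α/2}` on the homogeneous tree. -/
noncomputable def psiTree (Q : ℕ) (α : ℝ) (lam : ℝ) : ℝ :=
  (1 - gamma0 Q * Real.cos lam) ^ (α / 2)

open Real Set

/-- First derivative of ψ. -/
noncomputable def P1 (γ α lam : ℝ) : ℝ :=
  α / 2 * γ * (1 - γ * Real.cos lam) ^ (α / 2 - 1) * Real.sin lam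

/-- Second derivative of ψ. -/
noncomputable def P2 (γ α lam : ℝ) : ℝ :=
  α / 2 * γ * (1 - γ * Real.cos lam) ^ (α / 2 - 2) *
    (Real.cos lam - α / 2 * γ * Real.cos lam ^ 2 + (α / 2 - 1) * γ)

lemma sqrt_gt_one (Q : ℕ) (hQ : 2 ≤ Q) : 1 < Real.sqrt Q := by
  have h1 : (1:ℝ) < Q := by exact_mod_cast lt_of_lt_of_le one_lt_two hQ
  have := Real.sqrt_lt_sqrt (by norm_num) h1
  simpa using this

lemma gamma0_pos (Q : ℕ) (hQ : 2 ≤ Q) : 0 < gamma0 Q := by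
  have hs : (0:ℝ) < Real.sqrt Q := lt_trans one_pos (sqrt_gt_one Q hQ)
  have : 0 < Real.sqrt Q + (Real.sqrt Q)⁻¹ := by positivity
  exact div_pos two_pos this

lemma gamma0_lt_one (Q : ℕ) (hQ : 2 ≤ Q) : gamma0 Q < 1 := by
  have hs1 : 1 < Real.sqrt Q := sqrt_gt_one Q hQ
  have hs : (0:ℝ) < Real.sqrt Q := lt_trans one_pos hs1
  have hden : (2:ℝ) < Real.sqrt Q + (Real.sqrt Q)⁻¹ := by
    have hinv : Real.sqrt Q * (Real.sqrt Q)⁻¹ = 1 := mul_inv_cancel₀ hs.ne'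
    nlinarith [mul_pos (sub_pos.mpr hs1) (sub_pos.mpr hs1)]
  rw [gamma0, div_lt_one (by linarith)]
  exact hden

lemma u_pos {γ : ℝ} (hγ0 : 0 < γ) (hγ1 : γ < 1) (lam : ℝ) :
    0 < 1 - γ * Real.cos lam := by
  nlinarith [Real.cos_le_one lam, Real.neg_one_le_cos lam]

lemma hasDerivAt_inner (γ lam : ℝ) :
    HasDerivAt (fun x => 1 - γ * Real.cos x) (γ * Real.sin lam) lam := by
  simpa using ((Real.hasDerivAt_cos lam).const_mul γ).const_sub 1

lemma hasDerivAt_psi {γ : ℝ} (hγ0 : 0 < γ) (hγ1 : γ < 1) (α lam : ℝ) :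
    HasDerivAt (fun x => (1 - γ * Real.cos x) ^ (α / 2)) (P1 γ α lam) lam := by
  have h := (Real.hasDerivAt_rpow_const (x := 1 - γ * Real.cos lam) (p := α / 2)
    (Or.inl (u_pos hγ0 hγ1 lam).ne')).comp lam (hasDerivAt_inner γ lam)
  refine h.congr_deriv ?_
  unfold P1; ring

lemma hasDerivAt_P1 {γ : ℝ} (hγ0 : 0 < γ) (hγ1 : γ < 1) (α lam : ℝ) :
    HasDerivAt (P1 γ α) (P2 γ α lam) lam := by
  have hu := u_pos hγ0 hγ1 lam
  have h1 : HasDerivAt (fun x => (1 - γ * Real.cos x) ^ (α / 2 - 1))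
      ((α / 2 - 1) * (1 - γ * Real.cos lam) ^ (α / 2 - 1 - 1) * (γ * Real.sin lam)) lam :=
    by have h := (Real.hasDerivAt_rpow_const (x := 1 - γ * Real.cos lam) (p := α / 2 - 1)
        (Or.inl hu.ne')).comp lam (hasDerivAt_inner γ lam)
       exact h
  have h2 := (h1.mul (Real.hasDerivAt_sin lam)).const_mul (α / 2 * γ)
  have hfun : P1 γ α = fun x => α / 2 * γ *
      ((1 - γ * Real.cos x) ^ (α / 2 - 1) * Real.sin x) := by
    funext x; unfold P1; ring
  rw [hfun]
  refine h2.congr_deriv ?_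
  symm
  have e1 : (1 - γ * Real.cos lam) ^ (α / 2 - 1)
      = (1 - γ * Real.cos lam) ^ (α / 2 - 2) * (1 - γ * Real.cos lam) := by
    rw [show α / 2 - 1 = α / 2 - 2 + 1 by ring, Real.rpow_add_one hu.ne']
  have e2 : (α / 2 - 1 - 1) = α / 2 - 2 := by ring
  have hs : Real.sin lam ^ 2 = 1 - Real.cos lam ^ 2 := Real.sin_sq lam
  rw [e2]
  unfold P2
  rw [e1]
  linear_combination (-(α / 2 * γ * (1 - γ * Real.cos lam) ^ (α / 2 - 2) * (α / 2 - 1) * γ)) * hs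

theorem stmt16 (Q : ℕ) (hQ : 2 ≤ Q) (α : ℝ) (hα0 : 0 < α) (hα2 : α < 2) :
    -- (i) the stationary points of ψ are exactly πℤ, with ψ″(0) > 0 and ψ″(π) < 0
    (∀ lam : ℝ, deriv (psiTree Q α) lam = 0 ↔ ∃ k : ℤ, lam = k * Real.pi) ∧
    0 < iteratedDeriv 2 (psiTree Q α) 0 ∧
    iteratedDeriv 2 (psiTree Q α) Real.pi < 0 ∧
    -- (ii) unique zero λ₀ ∈ (0, π) of ψ″, lying in (0, π/2), with sign change
    (∃ lam0 : ℝ, lam0 ∈ Set.Ioo 0 Real.pi ∧ lam0 ∈ Set.Ioo 0 (Real.pi / 2) ∧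
      iteratedDeriv 2 (psiTree Q α) lam0 = 0 ∧
      (∀ lam ∈ Set.Ioo (0 : ℝ) Real.pi,
        iteratedDeriv 2 (psiTree Q α) lam = 0 → lam = lam0) ∧
      (∀ lam ∈ Set.Ico (0 : ℝ) lam0, 0 < iteratedDeriv 2 (psiTree Q α) lam) ∧
      (∀ lam ∈ Set.Ioc lam0 Real.pi, iteratedDeriv 2 (psiTree Q α) lam < 0) ∧
      -- ψ′ strictly increases on [0, λ₀] from 0 to M := ψ′(λ₀) > 0,
      -- and strictly decreases on [λ₀, π] from M to 0
      StrictMonoOn (deriv (psiTree Q α)) (Set.Icc 0 lam0) ∧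
      StrictAntiOn (deriv (psiTree Q α)) (Set.Icc lam0 Real.pi) ∧
      deriv (psiTree Q α) 0 = 0 ∧
      deriv (psiTree Q α) Real.pi = 0 ∧
      0 < deriv (psiTree Q α) lam0 ∧
      -- (iii) stationary points of ψ_{t,r}(λ) = t·ψ(λ) − r·λ on (−π, π]
      (∀ t r : ℝ, 0 < t → 0 ≤ r →
        (deriv (psiTree Q α) lam0 < r / t →
          ∀ lam ∈ Set.Ioc (-Real.pi) Real.pi,
            deriv (fun x => t * psiTree Q α x - r * x) lam ≠ 0) ∧
        (r / t = deriv (psiTree Q α) lam0 →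
          ∃! lam : ℝ, lam ∈ Set.Ioc (-Real.pi) Real.pi ∧
            deriv (fun x => t * psiTree Q α x - r * x) lam = 0) ∧
        (r / t < deriv (psiTree Q α) lam0 →
          ∃ lam1 ∈ Set.Ico (0 : ℝ) lam0, ∃ lam2 ∈ Set.Ioc lam0 Real.pi,
            deriv (fun x => t * psiTree Q α x - r * x) lam1 = 0 ∧
            deriv (fun x => t * psiTree Q α x - r * x) lam2 = 0 ∧
            ∀ lam ∈ Set.Ioc (-Real.pi) Real.pi,
              deriv (fun x => t * psiTree Q α x - r * x) lam = 0 →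
                lam = lam1 ∨ lam = lam2))) := by

  have hγ0 : 0 < gamma0 Q := gamma0_pos Q hQ
  have hγ1 : gamma0 Q < 1 := gamma0_lt_one Q hQ
  have hψd : ∀ lam, HasDerivAt (psiTree Q α) (P1 (gamma0 Q) α lam) lam := fun lam =>
    hasDerivAt_psi hγ0 hγ1 α lam
  set γ := gamma0 Q with hγdef
  have hderiv : deriv (psiTree Q α) = P1 γ α := funext fun lam => (hψd lam).deriv
  have hP1d : ∀ lam, HasDerivAt (P1 γ α) (P2 γ α lam) lam := fun lam =>
    hasDerivAt_P1 hγ0 hγ1 α lam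
  have hderiv2 : ∀ lam, iteratedDeriv 2 (psiTree Q α) lam = P2 γ α lam := by
    intro lam
    rw [show (2:ℕ) = 1 + 1 from rfl, iteratedDeriv_succ, iteratedDeriv_one, hderiv]
    exact (hP1d lam).deriv
  have hP1diff : Differentiable ℝ (P1 γ α) := fun lam => (hP1d lam).differentiableAt
  have hP1cont : Continuous (P1 γ α) := hP1diff.continuous
  set g : ℝ → ℝ := fun c => c - α / 2 * γ * c ^ 2 + (α / 2 - 1) * γ with hgdef
  have hgcont : Continuous g := by rw [hgdef]; continuity
  have hg0 : g 0 < 0 := by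
    have h : g 0 = (α / 2 - 1) * γ := by simp only [hgdef]; ring
    rw [h]; nlinarith
  have hg1 : g 1 = 1 - γ := by simp only [hgdef]; ring
  have hgIoo : (0:ℝ) ∈ Ioo (g 0) (g 1) := ⟨hg0, by rw [hg1]; linarith⟩
  obtain ⟨c₀, hc₀mem, hc₀⟩ :=
    intermediate_value_Ioo (by norm_num : (0:ℝ) ≤ 1) hgcont.continuousOn hgIoo
  obtain ⟨hc₀0, hc₀1⟩ := hc₀mem
  have hc₀' : c₀ - α / 2 * γ * c₀ ^ 2 + (α / 2 - 1) * γ = 0 := by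
    have h := hc₀; simp only [hgdef] at h; exact h
  have hfact : ∀ c : ℝ, g c = (c - c₀) * (1 - α / 2 * γ * (c + c₀)) := by
    intro c; simp only [hgdef]; linear_combination hc₀'
  have hK : 0 < 1 - α / 2 * γ * (1 + c₀) := by
    have h1 := hfact 1
    rw [hg1] at h1
    nlinarith
  have hfpos : ∀ c : ℝ, c ≤ 1 → 0 < 1 - α / 2 * γ * (c + c₀) := by
    intro c hc
    nlinarith [mul_nonneg (by positivity : (0:ℝ) ≤ α / 2 * γ) (sub_nonneg.mpr hc)]
  have hgpos : ∀ c : ℝ, c ≤ 1 → c₀ < c → 0 < g c := fun c hc hltc => by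
    rw [hfact]; exact mul_pos (sub_pos.mpr hltc) (hfpos c hc)
  have hgneg : ∀ c : ℝ, c ≤ 1 → c < c₀ → g c < 0 := fun c hc hltc => by
    rw [hfact]; exact mul_neg_of_neg_of_pos (sub_neg.mpr hltc) (hfpos c hc)
  set lam0 := Real.arccos c₀ with hlam0def
  have hcos0 : Real.cos lam0 = c₀ := Real.cos_arccos (by linarith) (by linarith)
  have hl0pos : 0 < lam0 := Real.arccos_pos.mpr hc₀1
  have hl0half : lam0 < Real.pi / 2 := Real.arccos_lt_pi_div_two.mpr hc₀0
  have hpi := Real.pi_pos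
  have hl0pi : lam0 < Real.pi := by linarith
  have hP2eq : ∀ lam, P2 γ α lam
      = α / 2 * γ * (1 - γ * Real.cos lam) ^ (α / 2 - 2) * g (Real.cos lam) := by
    intro lam; simp only [hgdef, P2]
  have hpref : ∀ lam, 0 < α / 2 * γ * (1 - γ * Real.cos lam) ^ (α / 2 - 2) := fun lam =>
    mul_pos (by positivity) (Real.rpow_pos_of_pos (u_pos hγ0 hγ1 lam) _)
  have hP2pos : ∀ lam ∈ Ico (0:ℝ) lam0, 0 < P2 γ α lam := by
    intro lam hl
    have hcos : c₀ < Real.cos lam := by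
      rw [← hcos0]
      exact Real.cos_lt_cos_of_nonneg_of_le_pi hl.1 hl0pi.le hl.2
    rw [hP2eq]
    exact mul_pos (hpref lam) (hgpos _ (Real.cos_le_one lam) hcos)
  have hP2neg : ∀ lam ∈ Ioc lam0 Real.pi, P2 γ α lam < 0 := by
    intro lam hl
    have hcos : Real.cos lam < c₀ := by
      rw [← hcos0]
      exact Real.cos_lt_cos_of_nonneg_of_le_pi hl0pos.le hl.2 hl.1
    rw [hP2eq]
    exact mul_neg_of_pos_of_neg (hpref lam) (hgneg _ (Real.cos_le_one lam) hcos)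
  have hP2lam0 : P2 γ α lam0 = 0 := by
    rw [hP2eq, hcos0, hc₀, mul_zero]
  have hprefP1 : ∀ lam, 0 < α / 2 * γ * (1 - γ * Real.cos lam) ^ (α / 2 - 1) := fun lam =>
    mul_pos (by positivity) (Real.rpow_pos_of_pos (u_pos hγ0 hγ1 lam) _)
  have hP1zero : ∀ lam, P1 γ α lam = 0 ↔ Real.sin lam = 0 := by
    intro lam
    unfold P1
    constructor
    · intro h
      rcases mul_eq_zero.mp h with h' | h'
      · exact absurd h' (hprefP1 lam).ne'
      · exact h'
    · intro h; rw [h, mul_zero]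
  have hP10 : P1 γ α 0 = 0 := (hP1zero 0).mpr Real.sin_zero
  have hP1pi : P1 γ α Real.pi = 0 := (hP1zero Real.pi).mpr Real.sin_pi
  have hM : 0 < P1 γ α lam0 := by
    unfold P1
    exact mul_pos (hprefP1 lam0) (Real.sin_pos_of_pos_of_lt_pi hl0pos hl0pi)
  have hmono : StrictMonoOn (P1 γ α) (Icc 0 lam0) := by
    apply strictMonoOn_of_deriv_pos (convex_Icc 0 lam0) hP1cont.continuousOn
    intro x hx
    rw [interior_Icc] at hx
    rw [(hP1d x).deriv]
    exact hP2pos x ⟨hx.1.le, hx.2⟩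
  have hanti : StrictAntiOn (P1 γ α) (Icc lam0 Real.pi) := by
    apply strictAntiOn_of_deriv_neg (convex_Icc lam0 Real.pi) hP1cont.continuousOn
    intro x hx
    rw [interior_Icc] at hx
    rw [(hP1d x).deriv]
    exact hP2neg x ⟨hx.1, hx.2.le⟩
  have hlt1 : ∀ lam ∈ Ico (0:ℝ) lam0, P1 γ α lam < P1 γ α lam0 := fun lam hl =>
    hmono ⟨hl.1, hl.2.le⟩ (right_mem_Icc.mpr hl0pos.le) hl.2
  have hlt2 : ∀ lam ∈ Ioc lam0 Real.pi, P1 γ α lam < P1 γ α lam0 := fun lam hl =>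
    hanti (left_mem_Icc.mpr hl0pi.le) ⟨hl.1.le, hl.2⟩ hl.1
  have hneg : ∀ lam : ℝ, -Real.pi < lam → lam < 0 → P1 γ α lam < 0 := by
    intro lam h1 h2
    unfold P1
    exact mul_neg_of_pos_of_neg (hprefP1 lam) (Real.sin_neg_of_neg_of_neg_pi_lt h2 h1)
  refine ⟨?_, ?_, ?_, lam0, ⟨hl0pos, hl0pi⟩, ⟨hl0pos, hl0half⟩, ?_, ?_, ?_, ?_, ?_, ?_,
    ?_, ?_, ?_, ?_⟩
  · intro lam
    rw [hderiv, hP1zero lam, Real.sin_eq_zero_iff]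
    constructor
    · rintro ⟨k, hk⟩; exact ⟨k, hk.symm⟩
    · rintro ⟨k, hk⟩; exact ⟨k, hk.symm⟩
  · rw [hderiv2]; exact hP2pos 0 ⟨le_refl 0, hl0pos⟩
  · rw [hderiv2]; exact hP2neg Real.pi ⟨hl0pi, le_refl _⟩
  · rw [hderiv2]; exact hP2lam0
  · intro lam hl h
    rw [hderiv2] at h
    rcases lt_trichotomy lam lam0 with hc | hc | hc
    · exact absurd h (hP2pos lam ⟨hl.1.le, hc⟩).ne'
    · exact hc
    · exact absurd h (hP2neg lam ⟨hc, hl.2.le⟩).ne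
  · intro lam hl
    rw [hderiv2]; exact hP2pos lam hl
  · intro lam hl
    rw [hderiv2]; exact hP2neg lam hl
  · rw [hderiv]; exact hmono
  · rw [hderiv]; exact hanti
  · rw [hderiv]; exact hP10
  · rw [hderiv]; exact hP1pi
  · rw [hderiv]; exact hM
  · intro t r ht hr
    rw [hderiv]
    have hρ0 : 0 ≤ r / t := div_nonneg hr ht.le
    have hdtr : ∀ lam : ℝ,
        deriv (fun x => t * psiTree Q α x - r * x) lam = t * P1 γ α lam - r := by
      intro lam
      have h := (((hψd lam).const_mul t).sub ((hasDerivAt_id lam).const_mul r)).deriv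
      exact h.trans (by ring)
    have hzero : ∀ lam : ℝ,
        deriv (fun x => t * psiTree Q α x - r * x) lam = 0 ↔ P1 γ α lam = r / t := by
      intro lam
      rw [hdtr, sub_eq_zero, eq_div_iff ht.ne', mul_comm t (P1 γ α lam)]
    refine ⟨?_, ?_, ?_⟩
    · intro hMlt lam hl h
      rw [hzero lam] at h
      rcases lt_or_ge lam 0 with h' | h'
      · have := hneg lam hl.1 h'; linarith
      · have hb : P1 γ α lam ≤ P1 γ α lam0 := by
          rcases le_total lam lam0 with h'' | h''
          · exact hmono.monotoneOn ⟨h', h''⟩ (right_mem_Icc.mpr hl0pos.le) h''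
          · exact hanti.antitoneOn (left_mem_Icc.mpr hl0pi.le) ⟨h'', hl.2⟩ h''
        linarith
    · intro hEq
      refine ⟨lam0, ⟨⟨by linarith, hl0pi.le⟩, (hzero lam0).mpr hEq.symm⟩, ?_⟩
      rintro y ⟨hy, hy0⟩
      rw [hzero y] at hy0
      have hyM : P1 γ α y = P1 γ α lam0 := by rw [hy0, hEq]
      by_contra hne
      rcases lt_or_ge y 0 with h' | h'
      · have := hneg y hy.1 h'; linarith
      rcases lt_trichotomy y lam0 with h'' | h'' | h''
      · have := hlt1 y ⟨h', h''⟩; linarith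
      · exact hne h''
      · have := hlt2 y ⟨h'', hy.2⟩; linarith
    · intro hltM
      have h1 : r / t ∈ Icc (P1 γ α 0) (P1 γ α lam0) := ⟨by rw [hP10]; exact hρ0, hltM.le⟩
      obtain ⟨lam1, hm1, he1⟩ := intermediate_value_Icc hl0pos.le hP1cont.continuousOn h1
      have h2 : r / t ∈ Icc (P1 γ α Real.pi) (P1 γ α lam0) := ⟨by rw [hP1pi]; exact hρ0, hltM.le⟩
      obtain ⟨lam2, hm2, he2⟩ := intermediate_value_Icc' hl0pi.le hP1cont.continuousOn h2
      have hn1 : lam1 ≠ lam0 := fun h => by rw [h] at he1; linarith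
      have hn2 : lam0 ≠ lam2 := fun h => by rw [← h] at he2; linarith
      refine ⟨lam1, ⟨hm1.1, lt_of_le_of_ne hm1.2 hn1⟩, lam2,
        ⟨lt_of_le_of_ne hm2.1 hn2, hm2.2⟩,
        (hzero lam1).mpr he1, (hzero lam2).mpr he2, ?_⟩
      intro lam hl h
      rw [hzero lam] at h
      rcases lt_or_ge lam 0 with h' | h'
      · have := hneg lam hl.1 h'; linarith
      rcases le_total lam lam0 with h'' | h''
      · left
        exact hmono.injOn ⟨h', h''⟩ hm1 (by rw [h, he1])
      · right
        exact hanti.injOn ⟨h'', hl.2⟩ hm2 (by rw [h, he2])
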